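/- Let p ≥ 1 with Hölder conjugate q, s > 0, and let f, g : ℝⁿ → [0,∞) be s-concave functions whose supports both contain the origin. Then f ⊕_{p,s} g is s-concave and its support contains the origin. -/

import Mathlib

open MeasureTheory Set Function
open scoped Classical ENNReal

noncomputable section

abbrev En (n : ℕ) := EuclideanSpace ℝ (Fin n)

def fsupp {n : ℕ} (f : En n → ℝ) : Set (En n) := closure (Function.support f)

def MAdd {E : Type*} [AddCommMonoid E] [Module ℝ E] (M : Set (ℝ × ℝ)) (K L : Set E) :
    Set E :=
  {z | ∃ ab ∈ M, ∃ x ∈ K, ∃ y ∈ L, z = ab.1 • x + ab.2 • y}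

def oplusM {n : ℕ} (M : Set (ℝ × ℝ)) (s : ℝ) (f g : En n → ℝ) : En n → ℝ := fun z =>
  if z ∈ MAdd M (fsupp f) (fsupp g) then
    sSup {r | ∃ ab ∈ M, ∃ x ∈ fsupp f, ∃ y ∈ fsupp g,
      z = ab.1 • x + ab.2 • y ∧ r = (ab.1 * f x ^ s⁻¹ + ab.2 * g y ^ s⁻¹) ^ s}
  else 0

/-- the coefficient set `{((1-t)^{1/q}, t^{1/q}) : t ∈ [0,1]}`, where `1/q = 1 - 1/p`. -/
def Mp (p : ℝ) : Set (ℝ × ℝ) :=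
  {ab | ∃ t ∈ Icc (0:ℝ) 1, ab = ((1 - t) ^ (1 - p⁻¹), t ^ (1 - p⁻¹))}

/-- the function `f ⊕_{p,s} g`. -/
def oplusP {n : ℕ} (p s : ℝ) (f g : En n → ℝ) : En n → ℝ := oplusM (Mp p) s f g

/-- the `L_p` scaling `[λ ×_{p,s} f](x) = λ^{s/p} f(λ^{-1/p} x)`. -/
def lpScale {n : ℕ} (p s l : ℝ) (f : En n → ℝ) : En n → ℝ :=
  fun x => l ^ (s / p) * f ((l ^ (-p⁻¹)) • x)

def IsSConcave {n : ℕ} (s : ℝ) (f : En n → ℝ) : Prop :=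
  (fsupp f).Nonempty ∧ IsCompact (fsupp f) ∧ Convex ℝ (fsupp f) ∧
  ConcaveOn ℝ (fsupp f) (fun x => f x ^ s⁻¹)

/-! ### Auxiliary lemmas -/

/-- A nonnegative concave function on a compact convex set is bounded above. -/
lemma concave_bddAbove_aux {E : Type*} [NormedAddCommGroup E] [NormedSpace ℝ E]
    [FiniteDimensional ℝ E] {K : Set E} (hK : IsCompact K) (hconv : Convex ℝ K)
    (hne : K.Nonempty) {F : E → ℝ} (hF : ConcaveOn ℝ K F) (hF0 : ∀ x ∈ K, 0 ≤ F x) :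
    ∃ M, ∀ x ∈ K, F x ≤ M := by
  obtain ⟨c, hc⟩ := hne.intrinsicInterior hconv
  rw [intrinsicInterior] at hc
  obtain ⟨ct, hct, rfl⟩ := hc
  obtain ⟨ε, hε, hball⟩ := Metric.isOpen_iff.1 isOpen_interior ct hct
  have hcK : (ct : E) ∈ K := Set.mem_preimage.1 (interior_subset hct)
  obtain ⟨r, hr⟩ := hK.isBounded.subset_closedBall (ct : E)
  set D : ℝ := max r 1 with hD
  have hD1 : (1:ℝ) ≤ D := le_max_right _ _
  have hDpos : (0:ℝ) < D := lt_of_lt_of_le one_pos hD1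
  set δ : ℝ := ε / (2 * D) with hδdef
  have hδ : 0 < δ := div_pos hε (by positivity)
  refine ⟨F ct * (1 + δ) / δ, fun x hx => ?_⟩
  set w : E := δ • ((ct : E) - x) + (ct : E) with hwdef
  have hw_span : w ∈ affineSpan ℝ K := by
    have h1 : (ct : E) ∈ affineSpan ℝ K := ct.2
    have h2 : x ∈ affineSpan ℝ K := subset_affineSpan ℝ K hx
    exact AffineSubspace.smul_vsub_vadd_mem _ δ h1 h2 h1
  have hdist : dist (⟨w, hw_span⟩ : affineSpan ℝ K) ct < ε := by
    rw [Subtype.dist_eq]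
    have heq : dist w (ct : E) = δ * ‖(ct : E) - x‖ := by
      rw [dist_eq_norm]
      simp [hwdef, norm_smul, abs_of_pos hδ]
    rw [heq]
    have h1 : ‖(ct : E) - x‖ ≤ D := by
      have hx' := hr hx
      rw [Metric.mem_closedBall] at hx'
      calc ‖(ct : E) - x‖ = dist x (ct : E) := by rw [← dist_eq_norm, dist_comm]
        _ ≤ r := hx'
        _ ≤ D := le_max_left _ _
    calc δ * ‖(ct : E) - x‖ ≤ δ * D := mul_le_mul_of_nonneg_left h1 hδ.le
      _ = ε / 2 := by rw [hδdef, div_mul_eq_mul_div, mul_div_mul_right _ _ hDpos.ne']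
      _ < ε := by linarith
  have hwK : w ∈ K := by
    have h : (⟨w, hw_span⟩ : affineSpan ℝ K) ∈ Subtype.val ⁻¹' K :=
      interior_subset (hball hdist)
    exact h
  have hcomb : (1 / (1 + δ)) • w + (δ / (1 + δ)) • x = (ct : E) := by
    have h1δ : (1 : ℝ) + δ ≠ 0 := by positivity
    rw [hwdef]
    match_scalars <;> (field_simp; try ring)
  have hsum : (1 / (1 + δ)) + (δ / (1 + δ)) = 1 := by
    rw [← add_div, div_self]; positivity
  have hconc := hF.2 hwK hx (by positivity) (by positivity) hsum
  rw [hcomb] at hconc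
  have hFw : 0 ≤ F w := hF0 w hwK
  have h1δpos : (0:ℝ) < 1 + δ := by positivity
  simp only [smul_eq_mul] at hconc
  rw [le_div_iff₀ hδ]
  have hm := mul_le_mul_of_nonneg_left hconc h1δpos.le
  have e1 : (1+δ) * (1 / (1 + δ) * F w) = F w := by field_simp
  have e2 : (1+δ) * (δ / (1 + δ) * F x) = δ * F x := by field_simp; try ring
  nlinarith [hm, hFw]

lemma split_point_aux {E : Type*} [NormedAddCommGroup E] [NormedSpace ℝ E]
    {K : Set E} (hconv : Convex ℝ K) (h0 : (0 : E) ∈ K)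
    {F : E → ℝ} (hF : ConcaveOn ℝ K F) (hF0 : ∀ x, 0 ≤ F x)
    {c1 c2 A' : ℝ} (hc1 : 0 ≤ c1) (hc2 : 0 ≤ c2) (hA : c1 + c2 ≤ A')
    {x1 x2 : E} (hx1 : x1 ∈ K) (hx2 : x2 ∈ K) :
    ∃ x' ∈ K, A' • x' = c1 • x1 + c2 • x2 ∧ c1 * F x1 + c2 * F x2 ≤ A' * F x' := by
  rcases eq_or_lt_of_le (le_trans (by linarith : (0:ℝ) ≤ c1 + c2) hA) with hA0 | hA0
  · have hc1' : c1 = 0 := by linarith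
    have hc2' : c2 = 0 := by linarith
    refine ⟨0, h0, ?_, ?_⟩
    · simp [hc1', hc2', ← hA0]
    · simp [hc1', hc2', ← hA0]
  · rcases eq_or_lt_of_le (by linarith : (0:ℝ) ≤ c1 + c2) with hC0 | hC0
    · have hc1' : c1 = 0 := by linarith
      have hc2' : c2 = 0 := by linarith
      refine ⟨0, h0, by simp [hc1', hc2'], ?_⟩
      simp [hc1', hc2']
      exact mul_nonneg hA0.le (hF0 0)
    · set C := c1 + c2 with hCdef
      set m : E := (c1 / C) • x1 + (c2 / C) • x2 with hmdef
      have hmK : m ∈ K := hconv hx1 hx2 (by positivity) (by positivity) (by field_simp; exact hCdef.symm)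
      set x' : E := (C / A') • m with hx'def
      have hx'K : x' ∈ K := by
        have := hconv hmK h0 (le_of_lt (by positivity) : (0:ℝ) ≤ C / A')
          (by rw [sub_nonneg, div_le_one hA0]; exact hA : 0 ≤ 1 - C / A')
          (by ring)
        simpa using this
      refine ⟨x', hx'K, ?_, ?_⟩
      · rw [hx'def, hmdef, smul_smul, smul_add, smul_smul, smul_smul]
        congr 1 <;> (congr 1; field_simp)
      · have hFm := hF.2 hx1 hx2 (show (0:ℝ) ≤ c1 / C by positivity)
          (show (0:ℝ) ≤ c2 / C by positivity) (show c1 / C + c2 / C = 1 by field_simp; exact hCdef.symm)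
        have hFx' := hF.2 hmK h0 (le_of_lt (by positivity) : (0:ℝ) ≤ C / A')
          (by rw [sub_nonneg, div_le_one hA0]; exact hA : 0 ≤ 1 - C / A') (by ring)
        simp only [smul_eq_mul, zero_smul, add_zero, ge_iff_le] at hFm hFx'
        have hx'eq : (C / A') • m + (1 - C / A') • (0:E) = x' := by simp [hx'def]
        rw [hx'eq] at hFx'
        have h1 : C / A' * F m + (1 - C / A') * F 0 ≤ F x' := hFx'
        have h2 : c1 / C * F x1 + c2 / C * F x2 ≤ F m := hFm
        have hF0m := hF0 (0:E)
        have key : C * F m ≤ A' * F x' := by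
          have hmul := mul_le_mul_of_nonneg_left h1 hA0.le
          have hexp : A' * (C / A' * F m) = C * F m := by field_simp; try ring
          rw [mul_add, hexp] at hmul
          have hnn : 0 ≤ A' * ((1 - C / A') * F 0) :=
            mul_nonneg hA0.le (mul_nonneg (sub_nonneg.2 ((div_le_one hA0).2 hA)) hF0m)
          calc C * F m ≤ C * F m + A' * ((1 - C / A') * F 0) := le_add_of_nonneg_right hnn
            _ ≤ A' * F x' := hmul
        have key2 : c1 * F x1 + c2 * F x2 ≤ C * F m := by
          have := mul_le_mul_of_nonneg_left h2 hC0.le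
          have e1 : C * (c1 / C * F x1) = c1 * F x1 := by field_simp; try ring
          have e2 : C * (c2 / C * F x2) = c2 * F x2 := by field_simp; try ring
          rw [mul_add, e1, e2] at this
          linarith
        linarith

lemma Mp_bounds_aux {p : ℝ} (hp : 1 ≤ p) {ab : ℝ × ℝ} (h : ab ∈ Mp p) :
    0 ≤ ab.1 ∧ ab.1 ≤ 1 ∧ 0 ≤ ab.2 ∧ ab.2 ≤ 1 := by
  obtain ⟨t, ⟨ht0, ht1⟩, rfl⟩ := h
  have he : 0 ≤ 1 - p⁻¹ := by
    have : p⁻¹ ≤ 1 := inv_le_one_of_one_le₀ hp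
    linarith
  refine ⟨Real.rpow_nonneg (by linarith) _, Real.rpow_le_one (by linarith) (by linarith) he,
    Real.rpow_nonneg ht0 _, Real.rpow_le_one ht0 ht1 he⟩

lemma Mp_combo_aux {p : ℝ} (hp : 1 ≤ p) {ab1 ab2 : ℝ × ℝ} (h1 : ab1 ∈ Mp p) (h2 : ab2 ∈ Mp p)
    {μ : ℝ} (hμ0 : 0 ≤ μ) (hμ1 : μ ≤ 1) :
    ∃ ab' ∈ Mp p, μ * ab1.1 + (1 - μ) * ab2.1 ≤ ab'.1 ∧
      μ * ab1.2 + (1 - μ) * ab2.2 ≤ ab'.2 := by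
  set e : ℝ := 1 - p⁻¹ with hedef
  have hppos : 0 < p := lt_of_lt_of_le one_pos hp
  have he0 : 0 ≤ e := by
    have : p⁻¹ ≤ 1 := inv_le_one_of_one_le₀ hp
    simp [hedef]; linarith
  have he1 : e < 1 := by
    have : 0 < p⁻¹ := inv_pos.2 hppos
    simp [hedef]; linarith
  obtain ⟨t1, ⟨ht10, ht11⟩, rfl⟩ := h1
  obtain ⟨t2, ⟨ht20, ht21⟩, rfl⟩ := h2
  simp only
  rcases eq_or_lt_of_le he0 with he' | he'
  · have hE : (1:ℝ) - p⁻¹ = 0 := by rw [hedef] at he'; linarith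
    refine ⟨((1 - 0) ^ (1 - p⁻¹), (0:ℝ) ^ (1 - p⁻¹)), ⟨0, ⟨le_refl _, zero_le_one⟩, rfl⟩, ?_, ?_⟩ <;>
      · simp only [hE, Real.rpow_zero]
        linarith
  · have heq : e * e⁻¹ = 1 := mul_inv_cancel₀ (ne_of_gt he')
    set q : ℝ := e⁻¹ with hqdef
    have hq1 : 1 ≤ q := by
      rw [hqdef, le_inv_comm₀ one_pos he']
      simpa using he1.le
    set a1 : ℝ := (1 - t1) ^ e
    set a2 : ℝ := (1 - t2) ^ e
    set b1 : ℝ := t1 ^ e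
    set b2 : ℝ := t2 ^ e
    have ha1 : 0 ≤ a1 := Real.rpow_nonneg (by linarith) _
    have ha2 : 0 ≤ a2 := Real.rpow_nonneg (by linarith) _
    have hb1 : 0 ≤ b1 := Real.rpow_nonneg ht10 _
    have hb2 : 0 ≤ b2 := Real.rpow_nonneg ht20 _
    set A : ℝ := μ * a1 + (1 - μ) * a2 with hAdef
    set B : ℝ := μ * b1 + (1 - μ) * b2 with hBdef
    have hA0 : 0 ≤ A := add_nonneg (mul_nonneg hμ0 ha1) (mul_nonneg (by linarith) ha2)
    have hB0 : 0 ≤ B := add_nonneg (mul_nonneg hμ0 hb1) (mul_nonneg (by linarith) hb2)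
    have heq' : e * q = 1 := heq
    have haq1 : a1 ^ q = 1 - t1 := by
      rw [← Real.rpow_mul (by linarith : (0:ℝ) ≤ 1 - t1), heq', Real.rpow_one]
    have haq2 : a2 ^ q = 1 - t2 := by
      rw [← Real.rpow_mul (by linarith : (0:ℝ) ≤ 1 - t2), heq', Real.rpow_one]
    have hbq1 : b1 ^ q = t1 := by
      rw [← Real.rpow_mul ht10, heq', Real.rpow_one]
    have hbq2 : b2 ^ q = t2 := by
      rw [← Real.rpow_mul ht20, heq', Real.rpow_one]
    have hconvq := convexOn_rpow hq1
    have hAq : A ^ q ≤ μ * (1 - t1) + (1 - μ) * (1 - t2) := by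
      have := hconvq.2 (mem_Ici.2 ha1) (mem_Ici.2 ha2) hμ0 (by linarith : (0:ℝ) ≤ 1 - μ)
        (by ring)
      simp only [smul_eq_mul] at this
      calc A ^ q ≤ μ * a1 ^ q + (1 - μ) * a2 ^ q := this
        _ = μ * (1 - t1) + (1 - μ) * (1 - t2) := by rw [haq1, haq2]
    have hBq : B ^ q ≤ μ * t1 + (1 - μ) * t2 := by
      have := hconvq.2 (mem_Ici.2 hb1) (mem_Ici.2 hb2) hμ0 (by linarith : (0:ℝ) ≤ 1 - μ)
        (by ring)
      simp only [smul_eq_mul] at this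
      calc B ^ q ≤ μ * b1 ^ q + (1 - μ) * b2 ^ q := this
        _ = μ * t1 + (1 - μ) * t2 := by rw [hbq1, hbq2]
    have hsum : A ^ q + B ^ q ≤ 1 := by linarith
    have hAq0 : 0 ≤ A ^ q := Real.rpow_nonneg hA0 _
    have hBq0 : 0 ≤ B ^ q := Real.rpow_nonneg hB0 _
    set t : ℝ := 1 - A ^ q with htdef
    have ht0 : 0 ≤ t := by
      have hA1 : A ^ q ≤ 1 := by linarith
      simp [htdef]; linarith
    have ht1 : t ≤ 1 := by simp [htdef]; linarith
    refine ⟨((1 - t) ^ (1 - p⁻¹), t ^ (1 - p⁻¹)), ⟨t, ⟨ht0, ht1⟩, rfl⟩, ?_, ?_⟩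
    · have : (1:ℝ) - t = A ^ q := by simp [htdef]
      rw [this, ← hedef, ← Real.rpow_mul hA0, mul_comm q e, heq', Real.rpow_one]
    · have hBt : B ^ q ≤ t := by simp [htdef]; linarith
      calc B = (B ^ q) ^ e := by
            rw [← Real.rpow_mul hB0, mul_comm q e, heq', Real.rpow_one]
        _ ≤ t ^ e := Real.rpow_le_rpow hBq0 hBt he0
        _ = t ^ (1 - p⁻¹) := by rw [hedef]

lemma Mp_compact_aux {p : ℝ} (hp : 1 ≤ p) : IsCompact (Mp p) := by
  have h : Mp p = (fun t : ℝ => ((1 - t) ^ (1 - p⁻¹), t ^ (1 - p⁻¹))) '' Icc 0 1 := by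
    ext ab
    simp only [Mp, mem_setOf_eq, mem_image]
    constructor
    · rintro ⟨t, ht, rfl⟩; exact ⟨t, ht, rfl⟩
    · rintro ⟨t, ht, rfl⟩; exact ⟨t, ht, rfl⟩
  rw [h]
  have he : (0:ℝ) ≤ 1 - p⁻¹ := by
    have : p⁻¹ ≤ 1 := inv_le_one_of_one_le₀ hp
    linarith
  refine isCompact_Icc.image (Continuous.prodMk ?_ ?_)
  · exact (continuous_const.sub continuous_id).rpow_const (fun x => Or.inr he)
  · exact continuous_id.rpow_const (fun x => Or.inr he)

lemma MAdd_compact_aux {E : Type*} [NormedAddCommGroup E] [NormedSpace ℝ E]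
    {M : Set (ℝ × ℝ)} {K L : Set E} (hM : IsCompact M) (hK : IsCompact K)
    (hL : IsCompact L) : IsCompact (MAdd M K L) := by
  have h : MAdd M K L =
      (fun q : (ℝ × ℝ) × E × E => q.1.1 • q.2.1 + q.1.2 • q.2.2) '' (M ×ˢ (K ×ˢ L)) := by
    ext z
    constructor
    · rintro ⟨ab, hab, x, hx, y, hy, rfl⟩
      exact ⟨⟨ab, x, y⟩, ⟨hab, hx, hy⟩, rfl⟩
    · rintro ⟨⟨ab, x, y⟩, ⟨hab, hx, hy⟩, rfl⟩
      exact ⟨ab, hab, x, hx, y, hy, rfl⟩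
  rw [h]
  exact (hM.prod (hK.prod hL)).image
    ((continuous_fst.fst.smul continuous_snd.fst).add
      (continuous_fst.snd.smul continuous_snd.snd))

lemma sSup_rpow_image_aux {s : ℝ} (hs : 0 < s) {A : Set ℝ} (hne : A.Nonempty)
    (hbdd : BddAbove A) (hA : ∀ a ∈ A, 0 ≤ a) :
    sSup ((fun w => w ^ s) '' A) = sSup A ^ s := by
  have hg : Monotone (fun w : ℝ => max w 0 ^ s) := fun u v huv =>
    Real.rpow_le_rpow (le_max_right u 0) (max_le_max huv (le_refl 0)) hs.le
  have hcont : ContinuousAt (fun w : ℝ => max w 0 ^ s) (sSup A) := by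
    have h2 : ContinuousAt (fun w : ℝ => max w 0) (sSup A) :=
      (continuous_id.max continuous_const).continuousAt
    exact h2.rpow_const (Or.inr hs.le)
  have hmap := hg.map_csSup_of_continuousAt hcont hne hbdd
  have hnn : 0 ≤ sSup A := by
    obtain ⟨a, ha⟩ := hne
    exact le_trans (hA a ha) (le_csSup hbdd ha)
  have h1 : max (sSup A) 0 = sSup A := max_eq_left hnn
  have h2 : (fun w : ℝ => max w 0 ^ s) '' A = (fun w : ℝ => w ^ s) '' A :=
    image_congr fun a ha => by rw [max_eq_left (hA a ha)]
  rw [← h2, ← hmap, h1]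

/-- If `f, g` are `s`-concave with supports containing the origin, then `f ⊕_{p,s} g`
is `s`-concave and its support contains the origin. -/
theorem oplusP_isSConcave {n : ℕ} (p s : ℝ) (hp : 1 ≤ p) (hs : 0 < s)
    (f g : En n → ℝ) (hf0 : ∀ x, 0 ≤ f x) (hg0 : ∀ x, 0 ≤ g x)
    (hf : IsSConcave s f) (hg : IsSConcave s g)
    (hfo : (0 : En n) ∈ fsupp f) (hgo : (0 : En n) ∈ fsupp g) :
    IsSConcave s (oplusP p s f g) ∧ (0 : En n) ∈ fsupp (oplusP p s f g) := by
  obtain ⟨hfne, hfcomp, hfconv, hfconc⟩ := hf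
  obtain ⟨hgne, hgcomp, hgconv, hgconc⟩ := hg
  have hF0 : ∀ x, 0 ≤ f x ^ s⁻¹ := fun x => Real.rpow_nonneg (hf0 x) _
  have hG0 : ∀ x, 0 ≤ g x ^ s⁻¹ := fun x => Real.rpow_nonneg (hg0 x) _
  obtain ⟨MF, hMF⟩ := concave_bddAbove_aux hfcomp hfconv hfne hfconc (fun x _ => hF0 x)
  obtain ⟨MG, hMG⟩ := concave_bddAbove_aux hgcomp hgconv hgne hgconc (fun x _ => hG0 x)
  set MK : Set (En n) := MAdd (Mp p) (fsupp f) (fsupp g) with hMKdef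
  have hMKcomp : IsCompact MK := MAdd_compact_aux (Mp_compact_aux hp) hfcomp hgcomp
  have hMKclosed : IsClosed MK := hMKcomp.isClosed
  set Aset : En n → Set ℝ := fun z => {r | ∃ ab ∈ Mp p, ∃ x ∈ fsupp f, ∃ y ∈ fsupp g,
      z = ab.1 • x + ab.2 • y ∧ r = ab.1 * f x ^ s⁻¹ + ab.2 * g y ^ s⁻¹} with hAsetdef
  have hop_eq : ∀ z, oplusP p s f g z =
      if z ∈ MK then sSup ((fun w => w ^ s) '' Aset z) else 0 := by
    intro z
    have hset : {r | ∃ ab ∈ Mp p, ∃ x ∈ fsupp f, ∃ y ∈ fsupp g,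
        z = ab.1 • x + ab.2 • y ∧ r = (ab.1 * f x ^ s⁻¹ + ab.2 * g y ^ s⁻¹) ^ s}
        = (fun w => w ^ s) '' Aset z := by
      ext r
      constructor
      · rintro ⟨ab, hab, x, hx, y, hy, hz, rfl⟩
        exact ⟨ab.1 * f x ^ s⁻¹ + ab.2 * g y ^ s⁻¹,
          ⟨ab, hab, x, hx, y, hy, hz, rfl⟩, rfl⟩
      · rintro ⟨w, ⟨ab, hab, x, hx, y, hy, hz, rfl⟩, rfl⟩
        exact ⟨ab, hab, x, hx, y, hy, hz, rfl⟩
    simp only [oplusP, oplusM, hMKdef]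
    rw [hset]
  have hAnn : ∀ z, ∀ r ∈ Aset z, 0 ≤ r := by
    rintro z r ⟨ab, hab, x, hx, y, hy, hz, rfl⟩
    obtain ⟨ha0, _, hb0, _⟩ := Mp_bounds_aux hp hab
    exact add_nonneg (mul_nonneg ha0 (hF0 x)) (mul_nonneg hb0 (hG0 y))
  have hMF0 : 0 ≤ MF := le_trans (hF0 0) (hMF 0 hfo)
  have hMG0 : 0 ≤ MG := le_trans (hG0 0) (hMG 0 hgo)
  have hAub : ∀ z, ∀ r ∈ Aset z, r ≤ MF + MG := by
    rintro z r ⟨ab, hab, x, hx, y, hy, hz, rfl⟩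
    obtain ⟨ha0, ha1, hb0, hb1⟩ := Mp_bounds_aux hp hab
    have h1 : ab.1 * f x ^ s⁻¹ ≤ MF := by
      calc ab.1 * f x ^ s⁻¹ ≤ 1 * f x ^ s⁻¹ := mul_le_mul_of_nonneg_right ha1 (hF0 x)
        _ = f x ^ s⁻¹ := one_mul _
        _ ≤ MF := hMF x hx
    have h2 : ab.2 * g y ^ s⁻¹ ≤ MG := by
      calc ab.2 * g y ^ s⁻¹ ≤ 1 * g y ^ s⁻¹ := mul_le_mul_of_nonneg_right hb1 (hG0 y)
        _ = g y ^ s⁻¹ := one_mul _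
        _ ≤ MG := hMG y hy
    linarith
  have hAbdd : ∀ z, BddAbove (Aset z) := fun z => ⟨MF + MG, fun r hr => hAub z r hr⟩
  have hAne : ∀ z ∈ MK, (Aset z).Nonempty := by
    rintro z ⟨ab, hab, x, hx, y, hy, rfl⟩
    exact ⟨_, ⟨ab, hab, x, hx, y, hy, rfl, rfl⟩⟩
  have hVnn : ∀ z, 0 ≤ sSup (Aset z) := fun z => Real.sSup_nonneg (hAnn z)
  have hVeq : ∀ z ∈ MK, oplusP p s f g z = sSup (Aset z) ^ s := by
    intro z hz
    rw [hop_eq z, if_pos hz, sSup_rpow_image_aux hs (hAne z hz) (hAbdd z) (hAnn z)]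
  have hVinv : ∀ z ∈ MK, oplusP p s f g z ^ s⁻¹ = sSup (Aset z) := by
    intro z hz
    rw [hVeq z hz, ← Real.rpow_mul (hVnn z), mul_inv_cancel₀ hs.ne', Real.rpow_one]
  have hop_nn : ∀ z, 0 ≤ oplusP p s f g z := by
    intro z
    rw [hop_eq z]
    split
    · exact Real.sSup_nonneg (by
        rintro r ⟨w, hw, rfl⟩
        exact Real.rpow_nonneg (hAnn _ _ hw) _)
    · exact le_refl 0
  -- the key combination lemma
  have key : ∀ μ : ℝ, 0 ≤ μ → μ ≤ 1 → ∀ z1 z2 : En n, ∀ r1 ∈ Aset z1, ∀ r2 ∈ Aset z2,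
      ∃ r ∈ Aset (μ • z1 + (1 - μ) • z2), μ * r1 + (1 - μ) * r2 ≤ r := by
    rintro μ hμ0 hμ1 z1 z2 r1 ⟨ab1, hab1, x1, hx1, y1, hy1, hz1, rfl⟩
      r2 ⟨ab2, hab2, x2, hx2, y2, hy2, hz2, rfl⟩
    obtain ⟨ab', hab', hA, hB⟩ := Mp_combo_aux hp hab1 hab2 hμ0 hμ1
    obtain ⟨ha10, _, hb10, _⟩ := Mp_bounds_aux hp hab1
    obtain ⟨ha20, _, hb20, _⟩ := Mp_bounds_aux hp hab2
    obtain ⟨x', hx', hxeq, hxineq⟩ := split_point_aux hfconv hfo hfconc hF0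
      (mul_nonneg hμ0 ha10) (mul_nonneg (by linarith) ha20) hA hx1 hx2
    obtain ⟨y', hy', hyeq, hyineq⟩ := split_point_aux hgconv hgo hgconc hG0
      (mul_nonneg hμ0 hb10) (mul_nonneg (by linarith) hb20) hB hy1 hy2
    refine ⟨ab'.1 * f x' ^ s⁻¹ + ab'.2 * g y' ^ s⁻¹,
      ⟨ab', hab', x', hx', y', hy', ?_, rfl⟩, ?_⟩
    · rw [hz1, hz2]
      rw [show ab'.1 • x' + ab'.2 • y' = (ab'.1 • x' : En n) + (ab'.2 • y' : En n) from rfl]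
      rw [hxeq, hyeq]
      module
    · nlinarith [hxineq, hyineq]
  -- membership of a point of K in MK, and oplusP ≥ f on support f
  have hab0 : ((1:ℝ), (0:ℝ) ^ (1 - p⁻¹)) ∈ Mp p := by
    refine ⟨0, ⟨le_refl _, zero_le_one⟩, ?_⟩
    rw [Prod.ext_iff]
    constructor
    · simp [Real.one_rpow]
    · rfl
  have hxMK : ∀ x ∈ fsupp f, x ∈ MK := by
    intro x hx
    exact ⟨_, hab0, x, hx, 0, hgo, by simp⟩
  have hge : ∀ x ∈ fsupp f, f x ≤ oplusP p s f g x := by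
    intro x hx
    have hmem : (1:ℝ) * f x ^ s⁻¹ + (0:ℝ) ^ (1 - p⁻¹) * g 0 ^ s⁻¹ ∈ Aset x :=
      ⟨_, hab0, x, hx, 0, hgo, by simp, rfl⟩
    have h1 : f x ^ s⁻¹ ≤ sSup (Aset x) := by
      refine le_trans ?_ (le_csSup (hAbdd x) hmem)
      have : 0 ≤ (0:ℝ) ^ (1 - p⁻¹) * g 0 ^ s⁻¹ :=
        mul_nonneg (Real.rpow_nonneg (le_refl 0) _) (hG0 0)
      linarith
    have := Real.rpow_le_rpow (hF0 x) h1 hs.le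
    rw [← Real.rpow_mul (hf0 x), inv_mul_cancel₀ hs.ne', Real.rpow_one] at this
    rw [hVeq x (hxMK x hx)]
    exact this
  have hsuppf : Function.support f ⊆ Function.support (oplusP p s f g) := by
    intro x hx
    have hfx : 0 < f x := lt_of_le_of_ne (hf0 x) (Ne.symm hx)
    have hxK : x ∈ fsupp f := subset_closure hx
    exact fun h => absurd (lt_of_lt_of_le hfx (hge x hxK)) (by rw [h]; exact lt_irrefl 0)
  have h0mem : (0 : En n) ∈ fsupp (oplusP p s f g) := closure_mono hsuppf hfo
  have hsupp_sub : Function.support (oplusP p s f g) ⊆ MK := by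
    intro z hz
    by_contra h
    apply hz
    rw [hop_eq z, if_neg h]
  have hfs_sub : fsupp (oplusP p s f g) ⊆ MK := closure_minimal hsupp_sub hMKclosed
  have hcompact : IsCompact (fsupp (oplusP p s f g)) :=
    hMKcomp.of_isClosed_subset isClosed_closure hfs_sub
  -- positivity of sSup (Aset z) on the support
  have hVpos : ∀ z ∈ Function.support (oplusP p s f g), 0 < sSup (Aset z) := by
    intro z hz
    have hzMK : z ∈ MK := hsupp_sub hz
    rcases lt_or_eq_of_le (hVnn z) with h | h
    · exact h
    · exfalso
      apply hz
      rw [hVeq z hzMK, ← h, Real.zero_rpow hs.ne']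
  -- support is convex
  have hconvsupp : Convex ℝ (Function.support (oplusP p s f g)) := by
    intro z1 hz1 z2 hz2 μ ν hμ hν hμν
    have hν' : ν = 1 - μ := by linarith
    subst hν'
    have hz1' : z1 ∈ MK := hsupp_sub hz1
    have hz2' : z2 ∈ MK := hsupp_sub hz2
    obtain ⟨r1, hr1, hr1pos⟩ := exists_lt_of_lt_csSup (hAne z1 hz1') (hVpos z1 hz1)
    obtain ⟨r2, hr2, hr2pos⟩ := exists_lt_of_lt_csSup (hAne z2 hz2') (hVpos z2 hz2)
    obtain ⟨r, hr, hrle⟩ := key μ hμ (by linarith) z1 z2 r1 hr1 r2 hr2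
    have hzMK : μ • z1 + (1 - μ) • z2 ∈ MK := by
      obtain ⟨ab, hab, x, hx, y, hy, hze, _⟩ := hr
      exact ⟨ab, hab, x, hx, y, hy, hze⟩
    have hrpos : 0 < r := by
      rcases lt_or_eq_of_le hμ with hμ' | hμ'
      · nlinarith
      · rw [← hμ'] at hrle
        nlinarith
    intro h
    rw [hVeq _ hzMK] at h
    have hV : 0 < sSup (Aset (μ • z1 + (1 - μ) • z2)) :=
      lt_of_lt_of_le hrpos (le_csSup (hAbdd _) hr)
    exact absurd h (ne_of_gt (Real.rpow_pos_of_pos hV s))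
  have hconvfs : Convex ℝ (fsupp (oplusP p s f g)) := hconvsupp.closure
  -- concavity
  have hconc : ConcaveOn ℝ (fsupp (oplusP p s f g)) (fun z => oplusP p s f g z ^ s⁻¹) := by
    refine ⟨hconvfs, ?_⟩
    intro z1 hz1 z2 hz2 μ ν hμ hν hμν
    have hν' : ν = 1 - μ := by linarith
    subst hν'
    have hz1' : z1 ∈ MK := hfs_sub hz1
    have hz2' : z2 ∈ MK := hfs_sub hz2
    have hzbar : μ • z1 + (1 - μ) • z2 ∈ fsupp (oplusP p s f g) :=
      hconvfs hz1 hz2 hμ hν hμν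
    have hzMK : μ • z1 + (1 - μ) • z2 ∈ MK := hfs_sub hzbar
    simp only [smul_eq_mul]
    rw [hVinv z1 hz1', hVinv z2 hz2', hVinv _ hzMK]
    -- show μ * sSup (Aset z1) + (1 - μ) * sSup (Aset z2) ≤ sSup (Aset z̄)
    refine le_of_forall_pos_le_add ?_
    intro ε hε
    obtain ⟨r1, hr1, hr1'⟩ := exists_lt_of_lt_csSup (hAne z1 hz1')
      (show sSup (Aset z1) - ε < sSup (Aset z1) by linarith)
    obtain ⟨r2, hr2, hr2'⟩ := exists_lt_of_lt_csSup (hAne z2 hz2')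
      (show sSup (Aset z2) - ε < sSup (Aset z2) by linarith)
    obtain ⟨r, hr, hrle⟩ := key μ hμ (by linarith) z1 z2 r1 hr1 r2 hr2
    have hrS : r ≤ sSup (Aset (μ • z1 + (1 - μ) • z2)) := le_csSup (hAbdd _) hr
    have h1 : μ * sSup (Aset z1) ≤ μ * (r1 + ε) :=
      mul_le_mul_of_nonneg_left (by linarith) hμ
    have h2 : (1 - μ) * sSup (Aset z2) ≤ (1 - μ) * (r2 + ε) :=
      mul_le_mul_of_nonneg_left (by linarith) (by linarith)
    have e1 : μ * (r1 + ε) + (1 - μ) * (r2 + ε) = μ * r1 + (1 - μ) * r2 + ε := by ring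
    linarith
  exact ⟨⟨⟨0, h0mem⟩, hcompact, hconvfs, hconc⟩, h0mem⟩

end
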